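/- Let G be a group of orientation-preserving homeomorphisms of ℝ (under composition) acting without fixed points, i.e., no element of G other than the identity fixes any point of ℝ. Then there exists an injective group homomorphism from G into the additive group (ℝ, +); in particular G is isomorphic to a subgroup of the additive group of ℝ. -/

import Mathlib

set_option linter.unusedSectionVars false

section Comm
variable {α : Type*} [Group α] [LinearOrder α]
  [CovariantClass α α (· * ·) (· ≤ ·)] [CovariantClass α α (Function.swap (· * ·)) (· ≤ ·)]

theorem holder_zpow_strictMono {ε : α} (hε : 1 < ε) : StrictMono (fun k : ℤ => ε ^ k) := by
  apply strictMono_int_of_lt_succ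
  intro k
  have h := mul_lt_mul_right hε (ε ^ k)
  rw [mul_one] at h
  simpa [zpow_add_one] using h

theorem holder_zarch (arch : ∀ g h : α, 1 < h → ∃ n : ℕ, g ≤ h ^ n)
    {ε : α} (hε : 1 < ε) (f : α) : ∃ m : ℤ, ε ^ m ≤ f ∧ f < ε ^ (m + 1) := by
  classical
  have sm := holder_zpow_strictMono hε
  set S : ℤ → Prop := fun k => f < ε ^ k with hS
  have hne : ∃ k, S k := by
    obtain ⟨n, hn⟩ := arch f ε hε
    refine ⟨(n : ℤ) + 1, ?_⟩
    have : f ≤ ε ^ (n : ℤ) := by rwa [zpow_natCast]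
    exact lt_of_le_of_lt this (sm (by omega))
  have hbdd : ∃ b, ∀ z, S z → b ≤ z := by
    obtain ⟨n, hn⟩ := arch f⁻¹ ε hε
    refine ⟨-(n : ℤ), fun z hz => ?_⟩
    have h1 : ε ^ (-(n : ℤ)) ≤ f := by
      rw [zpow_neg, zpow_natCast]
      exact inv_le_of_inv_le' (by simpa using hn)
    exact (sm.lt_iff_lt.1 (lt_of_le_of_lt h1 hz)).le
  obtain ⟨lb, hlb, hmin⟩ := Int.exists_least_of_bdd hbdd hne
  refine ⟨lb - 1, ?_, by simpa using hlb⟩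
  by_contra hcon
  push_neg at hcon
  exact absurd (hmin _ hcon) (by omega)

theorem holder_comm (arch : ∀ g h : α, 1 < h → ∃ n : ℕ, g ≤ h ^ n) (f g : α) :
    f * g = g * f := by
  by_cases hmin : ∃ a : α, 1 < a ∧ ∀ b, 1 < b → a ≤ b
  · -- there is a least element greater than 1 : cyclic case
    obtain ⟨a, ha, hamin⟩ := hmin
    have key : ∀ x : α, ∃ k : ℤ, x = a ^ k := by
      intro x
      obtain ⟨m, h1, h2⟩ := holder_zarch arch ha x
      set u := a ^ (-m) * x with hu
      have hu1 : 1 ≤ u := by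
        have := mul_le_mul_right h1 (a ^ (-m))
        rwa [← zpow_add, neg_add_cancel, zpow_zero] at this
      have hu2 : u < a := by
        have := mul_lt_mul_right h2 (a ^ (-m))
        rwa [← zpow_add, show -m + (m + 1) = 1 by ring, zpow_one] at this
      rcases eq_or_lt_of_le hu1 with h | h
      · refine ⟨m, ?_⟩
        have h' : (a ^ m)⁻¹ * x = 1 := by rw [← zpow_neg]; exact h.symm
        exact (inv_mul_eq_one.1 h').symm
      · exact absurd (hamin u h) (not_le.2 hu2)
    obtain ⟨j, rfl⟩ := key f
    obtain ⟨k, rfl⟩ := key g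
    rw [← zpow_add, ← zpow_add, add_comm]
  · push_neg at hmin
    have sq : ∀ c : α, 1 < c → ∃ ε, 1 < ε ∧ ε * ε ≤ c := by
      intro c hc
      obtain ⟨d, hd1, hdc⟩ := hmin c hc
      rcases le_total (d * d) c with h | h
      · exact ⟨d, hd1, h⟩
      · refine ⟨c * d⁻¹, ?_, ?_⟩
        · rw [← div_eq_mul_inv]; exact one_lt_div'.2 hdc
        · have h1 : d⁻¹ * c ≤ d := by
            simpa [inv_mul_cancel_left] using mul_le_mul_right h d⁻¹
          have h2 : d⁻¹ * c * d⁻¹ ≤ 1 := by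
            simpa using mul_le_mul_left h1 d⁻¹
          have h3 := mul_le_mul_right h2 c
          rw [mul_one] at h3
          calc c * d⁻¹ * (c * d⁻¹) = c * (d⁻¹ * c * d⁻¹) := by group
            _ ≤ c := h3
    have key : ∀ p q c : α, 1 < c → (p * q) * (q * p)⁻¹ < c := by
      intro p q c hc
      obtain ⟨ε, hε, hsq⟩ := sq c hc
      obtain ⟨m, hm1, hm2⟩ := holder_zarch arch hε p
      obtain ⟨n, hn1, hn2⟩ := holder_zarch arch hε q
      have h1 : p * q < ε ^ (m + 1) * ε ^ (n + 1) := mul_lt_mul_of_lt_of_le hm2 hn2.le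
      have h2 : ε ^ (m + n) ≤ q * p := by
        have := mul_le_mul' hn1 hm1
        rwa [← zpow_add, add_comm n m] at this
      have h3 : (q * p)⁻¹ ≤ ε ^ (-(m + n)) := by
        rw [zpow_neg]
        exact inv_le_inv_iff.2 h2
      calc (p * q) * (q * p)⁻¹ < ε ^ (m + 1) * ε ^ (n + 1) * ε ^ (-(m + n)) :=
            mul_lt_mul_of_lt_of_le h1 h3
        _ = ε * ε := by rw [← zpow_add, ← zpow_add, show m + 1 + (n + 1) + -(m + n) = 1 + 1 by ring, zpow_add, zpow_one]
        _ ≤ c := hsq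
    have hx2 : ((f * g) * (g * f)⁻¹)⁻¹ = (g * f) * (f * g)⁻¹ := by group
    have hx : (f * g) * (g * f)⁻¹ = 1 := by
      rcases lt_trichotomy ((f * g) * (g * f)⁻¹) 1 with h | h | h
      · have h1 : (1 : α) < ((f * g) * (g * f)⁻¹)⁻¹ := one_lt_inv_of_inv h
        rw [hx2] at h1
        exact absurd (key g f _ h1) (lt_irrefl _)
      · exact h
      · exact absurd (key f g _ h) (lt_irrefl _)
    have := mul_inv_eq_one.1 hx
    exact this
end Comm


section Embed
variable {α : Type*} [CommGroup α] [LinearOrder α] [IsOrderedMonoid α]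

theorem holder_embed (arch : ∀ g h : α, 1 < h → ∃ n : ℕ, g ≤ h ^ n) :
    ∃ φ : α →* Multiplicative ℝ, Function.Injective φ := by
  classical
  by_cases htriv : ∀ x : α, x = 1
  · exact ⟨1, fun x y _ => by rw [htriv x, htriv y]⟩
  push_neg at htriv
  obtain ⟨w, hw⟩ := htriv
  obtain ⟨a, ha⟩ : ∃ a : α, 1 < a := by
    rcases lt_trichotomy w 1 with h | h | h
    · exact ⟨w⁻¹, one_lt_inv_of_inv h⟩
    · exact absurd h hw
    · exact ⟨w, h⟩
  have sm : StrictMono (fun k : ℤ => a ^ k) := zpow_right_strictMono ha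
  -- greatest/least power bracketing
  have hL3 : ∀ y : α, ∃ m : ℤ, a ^ m ≤ y ∧ y ≤ a ^ (m + 1) := by
    intro y
    have hne : ∃ k : ℤ, a ^ k ≤ y := by
      obtain ⟨n, hn⟩ := arch y⁻¹ a ha
      refine ⟨-(n : ℤ), ?_⟩
      rw [zpow_neg, zpow_natCast]
      exact inv_le_of_inv_le' (by simpa using hn)
    have hbdd : ∃ b : ℤ, ∀ z, a ^ z ≤ y → z ≤ b := by
      obtain ⟨n, hn⟩ := arch y a ha
      refine ⟨(n : ℤ), fun z hz => ?_⟩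
      have : a ^ z ≤ a ^ (n : ℤ) := hz.trans (by rwa [zpow_natCast])
      exact sm.le_iff_le.1 this
    obtain ⟨m, hm, hmax⟩ := Int.exists_greatest_of_bdd hbdd hne
    refine ⟨m, hm, ?_⟩
    by_contra hcon
    push_neg at hcon
    exact absurd (hmax _ hcon.le) (by omega)
  set A : α → Set ℝ := fun g => {x | ∃ m n : ℤ, 0 < n ∧ x = m / n ∧ a ^ m ≤ g ^ n} with hA
  have hne : ∀ g, (A g).Nonempty := by
    intro g
    obtain ⟨m, h1, _⟩ := hL3 g
    exact ⟨m, m, 1, one_pos, by norm_num, by simpa using h1⟩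
  have hbdd : ∀ g, BddAbove (A g) := by
    intro g
    obtain ⟨n, hn⟩ := arch g a ha
    refine ⟨(n : ℝ), fun x hx => ?_⟩
    obtain ⟨m, q, hq, rfl, hmq⟩ := hx
    have h1 : g ^ q ≤ a ^ ((n : ℤ) * q) := by
      rw [zpow_mul]
      refine zpow_le_zpow_left hq.le ?_
      rwa [zpow_natCast]
    have h2 : m ≤ (n : ℤ) * q := sm.le_iff_le.1 (hmq.trans h1)
    have hqR : (0 : ℝ) < (q : ℝ) := by exact_mod_cast hq
    rw [div_le_iff₀ hqR]
    exact_mod_cast h2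
  set φ₀ : α → ℝ := fun g => sSup (A g) with hφ₀
  have hlow : ∀ (g : α) (m n : ℤ), 0 < n → a ^ m ≤ g ^ n → (m : ℝ) / n ≤ φ₀ g :=
    fun g m n hn h => le_csSup (hbdd g) ⟨m, n, hn, rfl, h⟩
  have hupp : ∀ (g : α) (m n : ℤ), 0 < n → g ^ n ≤ a ^ m → φ₀ g ≤ (m : ℝ) / n := by
    intro g m n hn h
    refine csSup_le (hne g) ?_
    rintro x ⟨p, q, hq, rfl, hpq⟩
    have h1 : a ^ (p * n) ≤ a ^ (m * q) := by
      calc a ^ (p * n) = (a ^ p) ^ n := by rw [zpow_mul]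
        _ ≤ (g ^ q) ^ n := zpow_le_zpow_left hn.le hpq
        _ = (g ^ n) ^ q := by rw [← zpow_mul, mul_comm, zpow_mul]
        _ ≤ (a ^ m) ^ q := zpow_le_zpow_left hq.le h
        _ = a ^ (m * q) := by rw [zpow_mul]
    have h2 : p * n ≤ m * q := sm.le_iff_le.1 h1
    have hqR : (0 : ℝ) < (q : ℝ) := by exact_mod_cast hq
    have hnR : (0 : ℝ) < (n : ℝ) := by exact_mod_cast hn
    rw [div_le_div_iff₀ hqR hnR]
    exact_mod_cast h2
  have hadd : ∀ g h : α, φ₀ (g * h) = φ₀ g + φ₀ h := by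
    intro g h
    have hk : ∀ k : ℤ, 0 < k →
        φ₀ g + φ₀ h - 2 / k ≤ φ₀ (g * h) ∧ φ₀ (g * h) ≤ φ₀ g + φ₀ h + 2 / k := by
      intro k hk
      obtain ⟨p, hp1, hp2⟩ := hL3 (g ^ k)
      obtain ⟨r, hr1, hr2⟩ := hL3 (h ^ k)
      have hkR : (0 : ℝ) < (k : ℝ) := by exact_mod_cast hk
      have e1 : (p : ℝ) / k ≤ φ₀ g := hlow g p k hk hp1
      have e2 : φ₀ g ≤ ((p : ℝ) + 1) / k := by
        have := hupp g (p + 1) k hk hp2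
        push_cast at this
        exact this
      have e3 : (r : ℝ) / k ≤ φ₀ h := hlow h r k hk hr1
      have e4 : φ₀ h ≤ ((r : ℝ) + 1) / k := by
        have := hupp h (r + 1) k hk hr2
        push_cast at this
        exact this
      have e5 : a ^ (p + r) ≤ (g * h) ^ k := by
        rw [mul_zpow, zpow_add]
        exact mul_le_mul' hp1 hr1
      have e6 : (g * h) ^ k ≤ a ^ (p + 1 + (r + 1)) := by
        rw [mul_zpow, zpow_add]
        exact mul_le_mul' hp2 hr2
      have e7 : ((p : ℝ) + r) / k ≤ φ₀ (g * h) := by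
        have := hlow (g * h) (p + r) k hk e5
        push_cast at this
        exact this
      have e8 : φ₀ (g * h) ≤ ((p : ℝ) + 1 + ((r : ℝ) + 1)) / k := by
        have := hupp (g * h) (p + 1 + (r + 1)) k hk e6
        push_cast at this
        exact this
      have c1 : ((p : ℝ) + 1) / k = (p : ℝ) / k + 1 / k := add_div _ _ _
      have c2 : ((r : ℝ) + 1) / k = (r : ℝ) / k + 1 / k := add_div _ _ _
      have c3 : ((p : ℝ) + r) / k = (p : ℝ) / k + (r : ℝ) / k := add_div _ _ _
      have c4 : ((p : ℝ) + 1 + ((r : ℝ) + 1)) / k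
          = (p : ℝ) / k + 1 / k + ((r : ℝ) / k + 1 / k) := by
        rw [add_div, c1, c2]
      have c5 : (2 : ℝ) / k = 1 / k + 1 / k := by ring
      constructor <;> linarith
    have hcl : ∀ ε : ℝ, 0 < ε → ∃ k : ℤ, 0 < k ∧ 2 / (k : ℝ) < ε := by
      intro ε hε
      obtain ⟨n, hn⟩ := exists_nat_gt (2 / ε)
      refine ⟨(n : ℤ) + 1, by positivity, ?_⟩
      have h1 : 2 / ε < ((n : ℝ) + 1) := hn.trans (lt_add_one _)
      rw [div_lt_iff₀ hε] at h1
      push_cast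
      rw [div_lt_iff₀ (by positivity)]
      nlinarith
    have h1 : φ₀ (g * h) ≤ φ₀ g + φ₀ h := by
      refine le_of_forall_pos_le_add ?_
      intro ε hε
      obtain ⟨k, hk0, hkε⟩ := hcl ε hε
      have := (hk k hk0).2
      linarith
    have h2 : φ₀ g + φ₀ h ≤ φ₀ (g * h) := by
      refine le_of_forall_pos_le_add ?_
      intro ε hε
      obtain ⟨k, hk0, hkε⟩ := hcl ε hε
      have := (hk k hk0).1
      linarith
    linarith
  have hone : φ₀ 1 = 0 := by
    have := hadd 1 1
    rw [mul_one] at this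
    linarith
  have hinv : ∀ g : α, φ₀ g⁻¹ = -φ₀ g := by
    intro g
    have h1 := hadd g g⁻¹
    rw [mul_inv_cancel, hone] at h1
    linarith
  have hpos : ∀ g : α, 1 < g → 0 < φ₀ g := by
    intro g hg
    obtain ⟨n, hn⟩ := arch a g hg
    have hn0 : 0 < n := by
      rcases Nat.eq_zero_or_pos n with h | h
      · subst h; simp at hn; exact absurd hn (not_le.2 ha)
      · exact h
    have h1 : a ^ (1 : ℤ) ≤ g ^ (n : ℤ) := by rw [zpow_one, zpow_natCast]; exact hn
    have h2 := hlow g 1 n (by exact_mod_cast hn0) h1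
    have hnR : (0 : ℝ) < (n : ℝ) := by exact_mod_cast hn0
    calc (0 : ℝ) < 1 / (n : ℝ) := by positivity
      _ ≤ φ₀ g := by simpa using h2
  refine ⟨MonoidHom.mk' (fun g => Multiplicative.ofAdd (φ₀ g)) (fun g h => by
      simp [hadd]), ?_⟩
  intro x y hxy
  have hxy0 : φ₀ x = φ₀ y := by simpa using congrArg Multiplicative.toAdd hxy
  have h0 : φ₀ (x * y⁻¹) = 0 := by rw [hadd, hinv]; linarith
  by_contra hne'
  have hxy1 : x * y⁻¹ ≠ 1 := fun hcon => hne' (mul_inv_eq_one.1 hcon)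
  rcases lt_trichotomy (x * y⁻¹) 1 with h | h | h
  · have h3 : (1 : α) < (x * y⁻¹)⁻¹ := one_lt_inv_of_inv h
    have h4 := hpos _ h3
    rw [hinv] at h4
    linarith
  · exact hxy1 h
  · have := hpos _ h
    linarith
end Embed


/-- A group of orientation-preserving homeomorphisms of `ℝ`
acting without fixed points is isomorphic to a subgroup of the additive group `(ℝ, +)`:
there is an injective group homomorphism `G →* Multiplicative ℝ`. -/
theorem fixed_point_free_group_embeds_in_real
    (G : Subgroup (Equiv.Perm ℝ))
    (hmono : ∀ g ∈ G, StrictMono ⇑g) (hcont : ∀ g ∈ G, Continuous ⇑g)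
    (hfree : ∀ g ∈ G, g ≠ 1 → ∀ x : ℝ, g x ≠ x) :
    ∃ φ : G →* Multiplicative ℝ, Function.Injective φ := by
  classical
  set e : ↥G → ℝ := fun g => (g : Equiv.Perm ℝ) 0 with he
  have hfix : ∀ u : ↥G, ∀ x : ℝ, (u : Equiv.Perm ℝ) x = x → u = 1 := by
    intro u x hx
    by_contra hu
    exact hfree ↑u u.2 (fun h1 => hu (Subtype.ext h1)) x hx
  have heq : ∀ g h : ↥G, ∀ x : ℝ, (g : Equiv.Perm ℝ) x = (h : Equiv.Perm ℝ) x → g = h := by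
    intro g h x hx
    have h1 : ((g⁻¹ * h : ↥G) : Equiv.Perm ℝ) x = x := by
      rw [Subgroup.coe_mul, Subgroup.coe_inv, Equiv.Perm.mul_apply, ← hx,
        Equiv.Perm.inv_def, Equiv.symm_apply_apply]
    have := hfix _ _ h1
    rwa [inv_mul_eq_one] at this
  have einj : Function.Injective e := fun g h hgh => heq g h 0 hgh
  have hpt : ∀ g h : ↥G, e g ≤ e h → ∀ x, (g : Equiv.Perm ℝ) x ≤ (h : Equiv.Perm ℝ) x := by
    intro g h hgh x
    by_contra hx
    push_neg at hx
    set F : ℝ → ℝ := fun t => (h : Equiv.Perm ℝ) t - (g : Equiv.Perm ℝ) t with hF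
    have hFc : ContinuousOn F (Set.uIcc x 0) :=
      (((hcont ↑h h.2).sub (hcont ↑g g.2))).continuousOn
    have h0 : (0 : ℝ) ∈ Set.uIcc (F x) (F 0) := by
      rw [Set.mem_uIcc]
      left
      constructor
      · simpa [hF] using hx.le
      · simpa [hF] using hgh
    obtain ⟨c, _, hc⟩ := intermediate_value_uIcc hFc h0
    have hgc : (g : Equiv.Perm ℝ) c = (h : Equiv.Perm ℝ) c := by
      have : (h : Equiv.Perm ℝ) c - (g : Equiv.Perm ℝ) c = 0 := hc
      linarith
    have := heq g h c hgc
    subst this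
    exact absurd rfl hx.ne
  letI lo : LinearOrder ↥G := LinearOrder.lift' e einj
  have hle : ∀ g h : ↥G, g ≤ h ↔ e g ≤ e h := fun _ _ => Iff.rfl
  have hlt : ∀ g h : ↥G, g < h ↔ e g < e h := fun _ _ => Iff.rfl
  letI : CovariantClass ↥G ↥G (· * ·) (· ≤ ·) := by
    constructor
    intro f g h hgh
    have h1 : (g : Equiv.Perm ℝ) 0 ≤ (h : Equiv.Perm ℝ) 0 := hgh
    show e (f * g) ≤ e (f * h)
    simp only [he, Subgroup.coe_mul, Equiv.Perm.mul_apply]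
    exact (hmono ↑f f.2).monotone h1
  letI : CovariantClass ↥G ↥G (Function.swap (· * ·)) (· ≤ ·) := by
    constructor
    intro f g h hgh
    show e (g * f) ≤ e (h * f)
    simp only [he, Subgroup.coe_mul, Equiv.Perm.mul_apply]
    exact hpt g h hgh _
  have harch : ∀ g h : ↥G, 1 < h → ∃ n : ℕ, g ≤ h ^ n := by
    intro g h hh
    have hne1 : h ≠ 1 := ne_of_gt hh
    have hstrict : ∀ x : ℝ, x < (h : Equiv.Perm ℝ) x := by
      intro x
      have h1 : x ≤ (h : Equiv.Perm ℝ) x := by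
        have := hpt 1 h (le_of_lt hh) x
        simpa using this
      rcases h1.lt_or_eq with h2 | h2
      · exact h2
      · exact absurd (hfix h x h2.symm) hne1
    by_contra hcon
    push_neg at hcon
    set u : ℕ → ℝ := fun n => e (h ^ n) with hu
    have husucc : ∀ n, u (n + 1) = (h : Equiv.Perm ℝ) (u n) := by
      intro n
      simp only [hu, he, pow_succ']
      rw [Subgroup.coe_mul, Equiv.Perm.mul_apply]
    have humono : Monotone u := monotone_nat_of_le_succ fun n => by
      rw [husucc n]; exact (hstrict (u n)).le
    have hub : ∀ n, u n < e g := fun n => hcon n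
    have hbdd : BddAbove (Set.range u) := ⟨e g, by rintro y ⟨n, rfl⟩; exact (hub n).le⟩
    set L : ℝ := ⨆ n, u n with hL
    have htend : Filter.Tendsto u Filter.atTop (nhds L) := tendsto_atTop_ciSup humono hbdd
    have h1 : Filter.Tendsto (fun n => u (n + 1)) Filter.atTop (nhds L) :=
      htend.comp (Filter.tendsto_add_atTop_nat 1)
    have h2 : Filter.Tendsto (fun n => (h : Equiv.Perm ℝ) (u n)) Filter.atTop
        (nhds ((h : Equiv.Perm ℝ) L)) := ((hcont ↑h h.2).tendsto L).comp htend
    have h3 : (fun n => u (n + 1)) = fun n => (h : Equiv.Perm ℝ) (u n) := funext husucc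
    rw [h3] at h1
    have h4 : (h : Equiv.Perm ℝ) L = L := tendsto_nhds_unique h2 h1
    exact hne1 (hfix h L h4)
  have hcomm := holder_comm harch
  letI cg : CommGroup ↥G := { (inferInstance : Group ↥G) with mul_comm := hcomm }
  letI : IsOrderedMonoid ↥G :=
    { mul_le_mul_left := fun a b hab c => mul_le_mul_left hab c }
  exact holder_embed harch
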